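/- Let M ≥ 2 and K ≥ 2 be integers with (M−1)(K−1) > 1. Then ∫₀^∞ x⁻¹ f_{M,2,K}(x) dx + ( (M−1)(K−1) / ((M−1)(K−1) − 1) ) · ∫₀^∞ x⁻¹ f_{M,1,K}(x) dx = K α_{M,K−1} − (K−1) ( 1 − (M−1)/((M−1)(K−1) − 1) ) α_{M,K}. -/

import Mathlib

open MeasureTheory ProbabilityTheory Filter

/-- Regularized lower incomplete gamma function `G(M,x) = (1/Γ(M)) ∫₀ˣ e^{-t} t^{M-1} dt`. -/
noncomputable def regGamma (M : ℕ) (x : ℝ) : ℝ :=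
  (1 / Real.Gamma M) * ∫ t in (0:ℝ)..x, Real.exp (-t) * t ^ (M - 1)

/-- Gamma(M,1) density `g(M,x) = e^{-x} x^{M-1} / Γ(M)`. -/
noncomputable def gammaDens (M : ℕ) (x : ℝ) : ℝ :=
  Real.exp (-x) * x ^ (M - 1) / Real.Gamma M

/-- The constant `α_{M,K} = ∫₀^∞ K (e^{-x} x^{M-2} / Γ(M)) G(M,x)^{K-1} dx`. -/
noncomputable def alphaMK (M K : ℕ) : ℝ :=
  ∫ x in Set.Ioi (0:ℝ), K * (Real.exp (-x) * x ^ (M - 2) / Real.Gamma M) * regGamma M x ^ (K - 1)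

/-- Density `f_{M,r,K}` of the `r`-th largest among `K` i.i.d. Gamma(M,1) random variables. -/
noncomputable def fOrd (M r K : ℕ) (x : ℝ) : ℝ :=
  (K.factorial : ℝ) / ((K - r).factorial * (r - 1).factorial) *
    regGamma M x ^ (K - r) * (1 - regGamma M x) ^ (r - 1) * gammaDens M x

/- ### Auxiliary lemmas -/

lemma gammaM_pos (M : ℕ) (hM : 1 ≤ M) : 0 < Real.Gamma M :=
  Real.Gamma_pos_of_pos (by exact_mod_cast hM)

lemma expPoly_integrableOn (m : ℕ) :
    IntegrableOn (fun t : ℝ => Real.exp (-t) * t ^ m) (Set.Ioi 0) := by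
  have h := Real.GammaIntegral_convergent (s := (m : ℝ) + 1) (by positivity)
  refine h.congr_fun (fun x hx => ?_) measurableSet_Ioi
  have : (m : ℝ) + 1 - 1 = (m : ℝ) := by ring
  rw [this]; simp only [Real.rpow_natCast]

lemma expPoly_integral (M : ℕ) (hM : 1 ≤ M) :
    ∫ t in Set.Ioi (0:ℝ), Real.exp (-t) * t ^ (M - 1) = Real.Gamma M := by
  have hMpos : (0:ℝ) < M := by exact_mod_cast hM
  rw [Real.Gamma_eq_integral hMpos]
  refine setIntegral_congr_fun measurableSet_Ioi fun x hx => ?_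
  have h1 : (M : ℝ) - 1 = ((M - 1 : ℕ) : ℝ) := by
    rw [Nat.cast_sub hM]; simp
  rw [h1, Real.rpow_natCast]

lemma expPoly_cont (m : ℕ) : Continuous (fun t : ℝ => Real.exp (-t) * t ^ m) := by
  continuity

lemma regGamma_continuous (M : ℕ) : Continuous (regGamma M) := by
  unfold regGamma
  refine continuous_const.mul ?_
  exact intervalIntegral.continuous_primitive
    (fun a b => ((expPoly_cont (M - 1)).intervalIntegrable a b)) 0

lemma gammaDens_continuous (M : ℕ) : Continuous (gammaDens M) := by
  unfold gammaDens
  exact (expPoly_cont (M - 1)).div_const _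

lemma regGamma_nonneg (M : ℕ) {x : ℝ} (hx : 0 ≤ x) : 0 ≤ regGamma M x := by
  unfold regGamma
  have h : 0 ≤ ∫ t in (0:ℝ)..x, Real.exp (-t) * t ^ (M - 1) := by
    refine intervalIntegral.integral_nonneg hx fun u hu => ?_
    have := hu.1
    positivity
  have hΓ : 0 ≤ Real.Gamma M := by
    rcases eq_or_lt_of_le (Nat.zero_le M) with h0 | h0
    · simp [← h0]
    · exact le_of_lt (gammaM_pos M h0)
  positivity

lemma regGamma_le_one (M : ℕ) (hM : 1 ≤ M) {x : ℝ} (hx : 0 ≤ x) : regGamma M x ≤ 1 := by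
  unfold regGamma
  have hΓ : 0 < Real.Gamma M := gammaM_pos M hM
  have h1 : ∫ t in (0:ℝ)..x, Real.exp (-t) * t ^ (M - 1)
      ≤ ∫ t in Set.Ioi (0:ℝ), Real.exp (-t) * t ^ (M - 1) := by
    rw [intervalIntegral.integral_of_le hx]
    refine setIntegral_mono_set (expPoly_integrableOn (M - 1)) ?_ ?_
    · filter_upwards [ae_restrict_mem measurableSet_Ioi] with t ht
      have := le_of_lt (Set.mem_Ioi.mp ht)
      positivity
    · exact Filter.Eventually.of_forall fun t ht => ht.1
  rw [expPoly_integral M hM] at h1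
  calc (1 / Real.Gamma M) * ∫ t in (0:ℝ)..x, Real.exp (-t) * t ^ (M - 1)
      ≤ (1 / Real.Gamma M) * Real.Gamma M := by
        exact mul_le_mul_of_nonneg_left h1 (by positivity)
    _ = 1 := by field_simp

lemma F_integrableOn (M : ℕ) (hM : 2 ≤ M) (j : ℕ) :
    IntegrableOn (fun x : ℝ => x⁻¹ * gammaDens M x * regGamma M x ^ j)
      (Set.Ioi (0:ℝ)) := by
  have hM1 : 1 ≤ M := le_trans one_le_two hM
  have hΓ : 0 < Real.Gamma M := gammaM_pos M hM1
  have hdom : IntegrableOn (fun x : ℝ => Real.exp (-x) * x ^ (M - 2) / Real.Gamma M)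
      (Set.Ioi 0) := (expPoly_integrableOn (M - 2)).div_const _
  refine Integrable.mono' hdom ?_ ?_
  · refine AEStronglyMeasurable.mul ?_ ?_
    · exact (measurable_inv.aestronglyMeasurable.mul
        (gammaDens_continuous M).measurable.aestronglyMeasurable)
    · exact ((regGamma_continuous M).pow j).measurable.aestronglyMeasurable
  · rw [ae_restrict_iff' measurableSet_Ioi]
    refine Filter.Eventually.of_forall fun x hx => ?_
    have hx0 : 0 < x := hx
    have hG0 : 0 ≤ regGamma M x := regGamma_nonneg M hx0.le
    have hG1 : regGamma M x ≤ 1 := regGamma_le_one M hM1 hx0.le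
    have hg0 : 0 ≤ gammaDens M x := by
      unfold gammaDens; positivity
    have hval : x⁻¹ * gammaDens M x * regGamma M x ^ j
        = (Real.exp (-x) * x ^ (M - 2) / Real.Gamma M) * regGamma M x ^ j := by
      unfold gammaDens
      have hpow : x ^ (M - 1) = x * x ^ (M - 2) := by
        rw [show M - 1 = (M - 2) + 1 by omega, pow_succ]
        ring
      field_simp [hpow]
      rw [hpow]
      ring
    rw [Real.norm_eq_abs, abs_of_nonneg (by positivity), hval]
    have hpj : regGamma M x ^ j ≤ 1 := pow_le_one₀ hG0 hG1
    calc (Real.exp (-x) * x ^ (M - 2) / Real.Gamma M) * regGamma M x ^ j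
        ≤ (Real.exp (-x) * x ^ (M - 2) / Real.Gamma M) * 1 := by
          exact mul_le_mul_of_nonneg_left hpj (by positivity)
      _ = Real.exp (-x) * x ^ (M - 2) / Real.Gamma M := mul_one _

/-- **Theorem 6 (performance benchmark for 2 selected users).** Integral identity for the
lower bound `p_L(2)` on average transmit power, combining the two largest norms with the
largest possible angle (`M ≥ 2`, `K ≥ 2`, `(M-1)(K-1) > 1`). -/
theorem avg_min_power_benchmark_two_users (M K : ℕ) (hM : 2 ≤ M) (hK : 2 ≤ K)
    (hMK : 1 < (M - 1) * (K - 1)) :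
    (∫ x in Set.Ioi (0:ℝ), x⁻¹ * fOrd M 2 K x) +
      (((M : ℝ) - 1) * ((K : ℝ) - 1) / (((M : ℝ) - 1) * ((K : ℝ) - 1) - 1)) *
        ∫ x in Set.Ioi (0:ℝ), x⁻¹ * fOrd M 1 K x
    = (K : ℝ) * alphaMK M (K - 1)
      - ((K : ℝ) - 1) *
          (1 - ((M : ℝ) - 1) / (((M : ℝ) - 1) * ((K : ℝ) - 1) - 1)) * alphaMK M K := by
  have hM1 : 1 ≤ M := le_trans one_le_two hM
  have hK1 : 1 ≤ K := le_trans one_le_two hK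
  set F : ℕ → ℝ → ℝ := fun j x => x⁻¹ * gammaDens M x * regGamma M x ^ j with hF
  set I : ℝ := ∫ x in Set.Ioi (0:ℝ), F (K - 1) x with hI
  set J : ℝ := ∫ x in Set.Ioi (0:ℝ), F (K - 2) x with hJ
  -- the first-order integral
  have h1 : (∫ x in Set.Ioi (0:ℝ), x⁻¹ * fOrd M 1 K x) = (K : ℝ) * I := by
    rw [hI, ← integral_const_mul]
    refine setIntegral_congr_fun measurableSet_Ioi fun x hx => ?_
    have hfac : (K.factorial : ℝ) = K * (K - 1).factorial := by
      rw [show K = (K - 1) + 1 by omega] ; push_cast [Nat.factorial_succ]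
      try simp [show K - 1 + 1 - 1 = K - 1 by omega]
    have hne : ((K - 1).factorial : ℝ) ≠ 0 := by positivity
    simp only [fOrd, hF]
    rw [hfac]
    field_simp
    ring
  -- the second-order integral
  have hintA := F_integrableOn M hM (K - 2)
  have hintB := F_integrableOn M hM (K - 1)
  have h2 : (∫ x in Set.Ioi (0:ℝ), x⁻¹ * fOrd M 2 K x)
      = (K : ℝ) * ((K : ℝ) - 1) * J - (K : ℝ) * ((K : ℝ) - 1) * I := by
    have hpt : ∀ x ∈ Set.Ioi (0:ℝ),
        x⁻¹ * fOrd M 2 K x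
          = (K : ℝ) * ((K : ℝ) - 1) * F (K - 2) x
            - (K : ℝ) * ((K : ℝ) - 1) * F (K - 1) x := by
      intro x hx
      have hfac : (K.factorial : ℝ) = K * ((K : ℝ) - 1) * (K - 2).factorial := by
        rw [show K = (K - 2) + 1 + 1 by omega]
        push_cast [Nat.factorial_succ]
        try simp only [show K - 2 + 1 + 1 - 2 = K - 2 by omega]
        ring
      have hne : ((K - 2).factorial : ℝ) ≠ 0 := by positivity
      have hpow : regGamma M x ^ (K - 2) * regGamma M x = regGamma M x ^ (K - 1) := by
        rw [show K - 1 = (K - 2) + 1 by omega, pow_succ]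
      simp only [fOrd, hF]
      rw [hfac]
      have : (2 : ℕ) - 1 = 1 := rfl
      field_simp
      rw [← hpow]
      ring
    rw [setIntegral_congr_fun measurableSet_Ioi hpt]
    rw [integral_sub ((hintA.const_mul _)) ((hintB.const_mul _))]
    rw [integral_const_mul, integral_const_mul]
  -- alphaMK M K
  have h3 : alphaMK M K = (K : ℝ) * I := by
    rw [hI, ← integral_const_mul]
    unfold alphaMK
    refine setIntegral_congr_fun measurableSet_Ioi fun x hx => ?_
    have hx0 : (0:ℝ) < x := hx
    have hpow : x ^ (M - 1) = x * x ^ (M - 2) := by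
      rw [show M - 1 = (M - 2) + 1 by omega, pow_succ]; ring
    simp only [hF, gammaDens]
    rw [hpow]
    field_simp
  -- alphaMK M (K-1)
  have h4 : alphaMK M (K - 1) = ((K : ℝ) - 1) * J := by
    rw [hJ, ← integral_const_mul]
    unfold alphaMK
    refine setIntegral_congr_fun measurableSet_Ioi fun x hx => ?_
    have hx0 : (0:ℝ) < x := hx
    have hpow : x ^ (M - 1) = x * x ^ (M - 2) := by
      rw [show M - 1 = (M - 2) + 1 by omega, pow_succ]; ring
    have hcast : ((K - 1 : ℕ) : ℝ) = (K : ℝ) - 1 := by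
      push_cast [Nat.cast_sub hK1]; ring
    simp only [hF, gammaDens, show K - 1 - 1 = K - 2 by omega]
    rw [hpow, hcast]
    field_simp
  rw [h1, h2, h3, h4]
  have hab : (1:ℝ) < ((M : ℝ) - 1) * ((K : ℝ) - 1) := by
    have : (1:ℝ) < (((M - 1) * (K - 1) : ℕ) : ℝ) := by exact_mod_cast hMK
    push_cast [Nat.cast_sub hM1, Nat.cast_sub hK1] at this
    linarith
  have hne : ((M : ℝ) - 1) * ((K : ℝ) - 1) - 1 ≠ 0 := by linarith
  field_simp
  ring
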